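/- In the DLC execution, if agent a_i is the globally highest-priority agent that has not yet finished its path, then a_i is the head of the queue Q_v of its next vertex v, and therefore advances at the current step. -/

import Mathlib

/-- If agent `i` is the globally highest-priority unfinished agent (all higher-priority
agents `j < i` have consumed every queue entry), the queues list pending visits in
priority order, and `i` has a pending entry in the queue of its next vertex `v`, then
`i` is the head of `Q v` and therefore advances at the current step. -/
theorem highest_priority_heads_queue {V : Type*} (k : ℕ)
    (Q : V → List (Fin k))
    (hsorted : ∀ w, (Q w).Pairwise (· ≤ ·))
    (i : Fin k) (v : V)
    (hfinished : ∀ j, j < i → ∀ w, j ∉ Q w)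
    (hpending : i ∈ Q v) :
    (Q v).head? = some i := by
  obtain ⟨h, t, hqv⟩ : ∃ h t, Q v = h :: t := by
    cases hq : Q v with
    | nil => rw [hq] at hpending; simp at hpending
    | cons h t => exact ⟨h, t, rfl⟩
  rw [hqv]
  have hs := hsorted v
  rw [hqv] at hs hpending
  have hhi : h ≤ i := by
    rcases List.mem_cons.mp hpending with rfl | hmem
    · exact le_refl _
    · exact (List.pairwise_cons.mp hs).1 i hmem
  have hih : ¬ h < i := fun hlt => hfinished h hlt v (hqv ▸ List.mem_cons_self (a := h) (l := t))
  simp [le_antisymm hhi (not_lt.mp hih)]
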